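/- arXiv:1401.5214 — 3 statements merged into one kernel-verified Lean document; each statement's English description precedes it below -/
import Mathlib

section
/- There is no constant C such that for all (x, y) in the punctured unit ball of ℂ² (with z = x + y and xyz ≠ 0), |xyz|·(|x|² + |y|² + |z|²)^{1/4} ≤ C·|xyz|^{4/3}; equivalently, the function (x,y) ↦ |xyz|·(|x|²+|y|²+|z|²)^{1/4} / |xyz|^{4/3} is not bounded above near the origin. -/
theorem stmt6 :
    ¬ ∃ C : ℝ, ∀ x y : ℂ,
      ‖x‖ ^ 2 + ‖y‖ ^ 2 < 1 →
      x * y * (x + y) ≠ 0 →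
      ‖(x * y * (x + y))‖ *
          (‖x‖ ^ 2 + ‖y‖ ^ 2 + ‖(x + y)‖ ^ 2) ^ ((1 : ℝ) / 4)
        ≤ C * ‖(x * y * (x + y))‖ ^ ((4 : ℝ) / 3) := by
  rintro ⟨C, hC⟩
  set A : ℝ := (6:ℝ) ^ ((1:ℝ)/4) with hA
  set B : ℝ := (2:ℝ) ^ ((4:ℝ)/3) with hB
  have hApos : 0 < A := Real.rpow_pos_of_pos (by norm_num) _
  have hBpos : 0 < B := Real.rpow_pos_of_pos (by norm_num) _
  set D : ℝ := max C 1 with hD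
  have hCD : C ≤ D := le_max_left _ _
  have hDpos : (0:ℝ) < D := lt_of_lt_of_le one_pos (le_max_right _ _)
  set s : ℝ := min (1/2) (A / (B * D)) with hs
  have hspos : 0 < s := lt_min (by norm_num) (div_pos hApos (mul_pos hBpos hDpos))
  have hs2 : s ≤ 1/2 := min_le_left _ _
  have hsA : B * D * s ≤ A := by
    have h := min_le_right (1/2) (A / (B * D))
    calc B * D * s ≤ B * D * (A / (B * D)) := by
          exact mul_le_mul_of_nonneg_left h (mul_pos hBpos hDpos).le
      _ = A := by field_simp
  set t : ℝ := s ^ 2 with ht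
  have htpos : 0 < t := pow_pos hspos 2
  have habt : ‖(t:ℂ)‖ = t := by
    rw [Complex.norm_real, Real.norm_eq_abs, abs_of_pos htpos]
  have habt2 : ‖((t:ℂ) + t)‖ = 2 * t := by
    have : ((t:ℂ) + t) = ((2*t : ℝ) : ℂ) := by push_cast; ring
    rw [this, Complex.norm_real, Real.norm_eq_abs, abs_of_pos (by linarith)]
  have h1 : ‖(t:ℂ)‖ ^ 2 + ‖(t:ℂ)‖ ^ 2 < 1 := by
    rw [habt]
    have : t ≤ 1/4 := by nlinarith
    nlinarith
  have htne : (t:ℂ) ≠ 0 := Complex.ofReal_ne_zero.2 htpos.ne'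
  have h2' : (t:ℂ) * t * ((t:ℂ) + t) ≠ 0 := by
    apply mul_ne_zero (mul_ne_zero htne htne)
    intro h
    have : (t:ℂ) = 0 := by
      have := h
      have h' : (2:ℂ) * t = 0 := by rw [two_mul]; exact this
      exact (mul_eq_zero.1 h').resolve_left two_ne_zero
    exact htne this
  have key := hC t t h1 h2'
  rw [norm_mul, norm_mul, habt, habt2] at key
  -- key : t * t * (2*t) * (t^2 + t^2 + (2*t)^2)^(1/4) ≤ C * (t*t*(2*t))^(4/3)
  have e1 : t * t * (2 * t) = 2 * t ^ 3 := by ring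
  have e2 : t ^ 2 + t ^ 2 + (2 * t) ^ 2 = 6 * t ^ 2 := by ring
  rw [e1, e2] at key
  have r1 : (6 * t ^ 2 : ℝ) ^ ((1:ℝ)/4) = A * s := by
    rw [Real.mul_rpow (by norm_num) (by positivity), hA]
    congr 1
    rw [← Real.rpow_natCast t 2, ← Real.rpow_mul htpos.le]
    norm_num
    rw [ht, ← Real.rpow_natCast s 2, ← Real.rpow_mul hspos.le]
    norm_num
  have r2 : (2 * t ^ 3 : ℝ) ^ ((4:ℝ)/3) = B * t ^ 4 := by
    rw [Real.mul_rpow (by norm_num) (by positivity), hB]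
    congr 1
    rw [← Real.rpow_natCast t 3, ← Real.rpow_mul htpos.le,
      show ((3:ℕ):ℝ) * (4/3) = ((4:ℕ):ℝ) by norm_num, Real.rpow_natCast]
  rw [r1, r2] at key
  have key2 : 2 * t ^ 3 * (A * s) ≤ D * (B * t ^ 4) := by
    have hnn : (0:ℝ) ≤ B * t ^ 4 := by positivity
    calc 2 * t ^ 3 * (A * s) ≤ C * (B * t ^ 4) := key
      _ ≤ D * (B * t ^ 4) := mul_le_mul_of_nonneg_right hCD hnn
  -- cancel t^3 * s
  have hpos3 : (0:ℝ) < t ^ 3 * s := by positivity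
  have key3 : 2 * A ≤ B * D * s := by
    have h := key2
    have e4 : D * (B * t ^ 4) = (B * D * s) * (t ^ 3 * s) := by rw [ht]; ring
    have e5 : 2 * t ^ 3 * (A * s) = (2 * A) * (t ^ 3 * s) := by ring
    have : (2 * A) * (t ^ 3 * s) ≤ (B * D * s) * (t ^ 3 * s) := by
      rw [← e4, ← e5]; exact key2
    exact le_of_mul_le_mul_right this hpos3
  nlinarith [hApos]
end

section
/- Along the curve x = y (so z = 2x), the quotient |x·y·z|·(|x|² + |y|² + |z|²)^{1/4} / |x·y·z|^{4/3} equals c·|x|^{−1/2} for a positive constant c = 2^{−1/3}·6^{1/4}, and hence tends to +∞ as x → 0. -/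
open Real Filter

lemma aux7 (a : ℝ) (ha : 0 < a) :
    (2 * a ^ 3) * (6 * a ^ 2) ^ ((1 : ℝ) / 4) / (2 * a ^ 3) ^ ((4 : ℝ) / 3)
      = (2 : ℝ) ^ (-(1 : ℝ) / 3) * (6 : ℝ) ^ ((1 : ℝ) / 4) * a ^ (-(1 : ℝ) / 2) := by
  have e1 : (2 * a ^ 3) ^ ((4:ℝ)/3) = 2 ^ ((4:ℝ)/3) * a ^ (4:ℝ) := by
    rw [Real.mul_rpow (by norm_num) (by positivity), ← Real.rpow_natCast a 3,
      ← Real.rpow_mul ha.le]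
    norm_num
  have e2 : (6 * a ^ 2) ^ ((1:ℝ)/4) = 6 ^ ((1:ℝ)/4) * a ^ ((1:ℝ)/2) := by
    rw [Real.mul_rpow (by norm_num) (by positivity), ← Real.rpow_natCast a 2,
      ← Real.rpow_mul ha.le]
    norm_num
  rw [e1, e2, div_eq_iff (by positivity)]
  have h2 : (2:ℝ) ^ (-(1:ℝ)/3) * 2 ^ ((4:ℝ)/3) = 2 := by
    rw [← Real.rpow_add (by norm_num)]; norm_num
  have ha2 : a ^ (-(1:ℝ)/2) * a ^ (4:ℝ) = a ^ 3 * a ^ ((1:ℝ)/2) := by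
    rw [← Real.rpow_add ha, ← Real.rpow_natCast a 3, ← Real.rpow_add ha]; norm_num
  calc 2 * a ^ 3 * (6 ^ ((1:ℝ)/4) * a ^ ((1:ℝ)/2))
      = (a ^ 3 * a ^ ((1:ℝ)/2)) * 6 ^ ((1:ℝ)/4) * 2 := by ring
    _ = (a ^ (-(1:ℝ)/2) * a ^ (4:ℝ)) * 6 ^ ((1:ℝ)/4) *
          ((2:ℝ) ^ (-(1:ℝ)/3) * 2 ^ ((4:ℝ)/3)) := by rw [h2, ha2]
    _ = 2 ^ (-(1:ℝ)/3) * 6 ^ ((1:ℝ)/4) * a ^ (-(1:ℝ)/2) * (2 ^ ((4:ℝ)/3) * a ^ (4:ℝ)) := by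
        ring

lemma aux7' (x : ℂ) (hx : x ≠ 0) :
    ‖(x * x * (2 * x))‖ *
        (‖x‖ ^ 2 + ‖x‖ ^ 2 + ‖(2 * x)‖ ^ 2) ^ ((1 : ℝ) / 4) /
        ‖(x * x * (2 * x))‖ ^ ((4 : ℝ) / 3)
      = (2 : ℝ) ^ (-(1 : ℝ) / 3) * (6 : ℝ) ^ ((1 : ℝ) / 4) *
          ‖x‖ ^ (-(1 : ℝ) / 2) := by
  have ha : 0 < ‖x‖ := by simpa using hx
  have h1 : ‖(x * x * (2 * x))‖ = 2 * ‖x‖ ^ 3 := by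
    simp [map_mul]; ring
  have h2 : ‖x‖ ^ 2 + ‖x‖ ^ 2 + ‖(2 * x)‖ ^ 2
      = 6 * ‖x‖ ^ 2 := by
    simp [map_mul]; ring
  rw [h1, h2, aux7 _ ha]

theorem stmt7 :
    (∀ x : ℂ, x ≠ 0 →
      ‖(x * x * (2 * x))‖ *
          (‖x‖ ^ 2 + ‖x‖ ^ 2 + ‖(2 * x)‖ ^ 2) ^ ((1 : ℝ) / 4) /
          ‖(x * x * (2 * x))‖ ^ ((4 : ℝ) / 3)
        = (2 : ℝ) ^ (-(1 : ℝ) / 3) * (6 : ℝ) ^ ((1 : ℝ) / 4) *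
            ‖x‖ ^ (-(1 : ℝ) / 2)) ∧
    Filter.Tendsto
      (fun x : ℂ =>
        ‖(x * x * (2 * x))‖ *
            (‖x‖ ^ 2 + ‖x‖ ^ 2 + ‖(2 * x)‖ ^ 2) ^ ((1 : ℝ) / 4) /
            ‖(x * x * (2 * x))‖ ^ ((4 : ℝ) / 3))
      (nhdsWithin 0 {0}ᶜ) Filter.atTop := by
  constructor
  · exact aux7'
  · have habs : Tendsto (fun x : ℂ => ‖x‖) (nhdsWithin 0 {0}ᶜ) (nhdsWithin 0 (Set.Ioi 0)) := by
      apply tendsto_nhdsWithin_of_tendsto_nhds_of_eventually_within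
      · simpa using (continuous_norm.tendsto (0:ℂ)).mono_left nhdsWithin_le_nhds
      · filter_upwards [self_mem_nhdsWithin] with x hx
        simpa using hx
    have hrpow : Tendsto (fun t : ℝ => t ^ (-(1:ℝ)/2)) (nhdsWithin 0 (Set.Ioi 0)) atTop := by
      have h1 : Tendsto (fun t : ℝ => t ^ ((1:ℝ)/2)) (nhdsWithin 0 (Set.Ioi 0)) (nhdsWithin 0 (Set.Ioi 0)) := by
        apply tendsto_nhdsWithin_of_tendsto_nhds_of_eventually_within
        · have := (Real.continuousAt_rpow_const 0 ((1:ℝ)/2) (by norm_num)).tendsto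
          simpa [Real.zero_rpow (by norm_num : (1:ℝ)/2 ≠ 0)] using this.mono_left nhdsWithin_le_nhds
        · filter_upwards [self_mem_nhdsWithin] with t ht
          exact Real.rpow_pos_of_pos ht _
      refine (h1.inv_tendsto_nhdsGT_zero).congr' ?_
      filter_upwards [self_mem_nhdsWithin] with t ht
      simp [Pi.inv_apply, ← Real.rpow_neg (le_of_lt ht), neg_div]
    have hc : (0:ℝ) < (2 : ℝ) ^ (-(1 : ℝ) / 3) * (6 : ℝ) ^ ((1 : ℝ) / 4) := by positivity
    have := (hrpow.comp habs).const_mul_atTop hc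
    refine this.congr' ?_
    filter_upwards [self_mem_nhdsWithin] with x hx
    exact (aux7' x (by simpa using hx)).symm
end

section
/- Define on ℂ² \ {(0,0)} the functions u(x,y) = (1/5)·log(|xy(x+y)|^{6}) and v(x,y) = (1/3)·log(|xy(x+y)|^{4}) (values −∞ where xy(x+y)=0, interpreted as extended reals). Then e^{u}/e^{v} = |xy(x+y)|^{6/5 − 4/3} = |xy(x+y)|^{−2/15} is not bounded above on any punctured neighborhood of the origin. -/
theorem stmt10 :
    (∀ x y : ℂ, x * y * (x + y) ≠ 0 →
      Real.exp ((1 / 5) * Real.log (‖x * y * (x + y)‖ ^ (6 : ℝ))) /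
          Real.exp ((1 / 3) * Real.log (‖x * y * (x + y)‖ ^ (4 : ℝ)))
        = ‖x * y * (x + y)‖ ^ (-(2 : ℝ) / 15)) ∧
    ∀ ε : ℝ, 0 < ε → ∀ C : ℝ, ∃ x y : ℂ,
      (x, y) ≠ (0, 0) ∧ ‖x‖ < ε ∧ ‖y‖ < ε ∧
      x * y * (x + y) ≠ 0 ∧
      C < ‖x * y * (x + y)‖ ^ (-(2 : ℝ) / 15) := by
  constructor
  · intro x y h
    have ha : 0 < ‖x * y * (x + y)‖ := by
      exact (norm_pos_iff.mpr h)
    rw [Real.log_rpow ha, Real.log_rpow ha, ← Real.exp_sub,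
      Real.rpow_def_of_pos ha]
    congr 1
    ring
  · intro ε hε C
    set M : ℝ := max C 1 with hM
    have hM1 : (1 : ℝ) ≤ M := le_max_right _ _
    have hMpos : 0 < M := lt_of_lt_of_le one_pos hM1
    set b : ℝ := M ^ (-(15 : ℝ) / 2) with hb
    have hbpos : 0 < b := Real.rpow_pos_of_pos hMpos _
    set t : ℝ := min (min ε 1) b / 2 with ht
    have htpos : 0 < t := by positivity
    have htε : t < ε := by
      have : t ≤ ε / 2 := by
        apply div_le_div_of_nonneg_right _ (by norm_num)
        exact le_trans (min_le_left _ _) (min_le_left _ _)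
      linarith
    have ht1 : t ≤ 1 / 2 := by
      apply div_le_div_of_nonneg_right _ (by norm_num)
      exact le_trans (min_le_left _ _) (min_le_right _ _)
    have htb : t ≤ b / 2 := by
      apply div_le_div_of_nonneg_right _ (by norm_num)
      exact min_le_right _ _
    refine ⟨(t : ℂ), (t : ℂ), ?_, ?_, ?_, ?_, ?_⟩
    · simp [Prod.ext_iff, htpos.ne']
    · simpa [abs_of_pos htpos] using htε
    · simpa [abs_of_pos htpos] using htε
    · have : ((t : ℂ)) ≠ 0 := by exact_mod_cast htpos.ne'
      intro hcontra
      rcases mul_eq_zero.1 hcontra with h | h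
      · rcases mul_eq_zero.1 h with h | h <;> exact this h
      · have : (t : ℂ) + t = 2 * t := by ring
        rw [this] at h
        rcases mul_eq_zero.1 h with h | h
        · norm_num at h
        · exact (by exact_mod_cast htpos.ne' : (t:ℂ) ≠ 0) h
    · have habs : ‖(t : ℂ) * t * (t + t)‖ = 2 * t ^ 3 := by
        have : ((t : ℂ)) * t * (t + t) = ((2 * t ^ 3 : ℝ) : ℂ) := by
          push_cast; ring
        rw [this, Complex.norm_real, Real.norm_eq_abs, abs_of_pos (by positivity)]
      rw [habs]
      have hlt : 2 * t ^ 3 < b := by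
        have h1 : t ^ 2 ≤ (1/2) ^ 2 := by
          apply pow_le_pow_left₀ htpos.le ht1
        nlinarith
      have h2 : b ^ (-(2 : ℝ) / 15) = M := by
        rw [hb, ← Real.rpow_mul hMpos.le]
        norm_num
      have h3 : b ^ (-(2 : ℝ) / 15) < (2 * t ^ 3) ^ (-(2 : ℝ) / 15) :=
        Real.rpow_lt_rpow_of_neg (by positivity) hlt (by norm_num)
      calc C ≤ M := le_max_left _ _
        _ = b ^ (-(2 : ℝ) / 15) := h2.symm
        _ < _ := h3
end
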